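/- arXiv:2509.01377 — 2 statements merged into one kernel-verified Lean document; each statement's English description precedes it below -/
import Mathlib

section
/- Let U ⊆ ℝ be an open interval and let f₀, f₁, ..., f_n : U → ℝ be linearly independent real-analytic functions, and suppose there exists an index j, 0 ≤ j ≤ n, such that f_j has constant sign on U (either f_j(x) > 0 for all x ∈ U, or f_j(x) < 0 for all x ∈ U). Then there exist real constants C₀, ..., C_n such that the function f = Σ_{i=0}^{n} C_i f_i has at least n simple zeros in U, i.e., at least n points x ∈ U with f(x) = 0 and f'(x) ≠ 0. -/
open Set
lemma hasDerivAt_det_updateRow {m : ℕ} (M : Matrix (Fin m) (Fin m) ℝ) (r : Fin m)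
    (g : ℝ → Fin m → ℝ) (g' : Fin m → ℝ) (s : ℝ) (hg : HasDerivAt g g' s) :
    HasDerivAt (fun y => (M.updateRow r (g y)).det) ((M.updateRow r g').det) s := by
  classical
  set L : (Fin m → ℝ) →ₗ[ℝ] ℝ :=
    ((Matrix.detRowAlternating : (Fin m → ℝ) [⋀^Fin m]→ₗ[ℝ] ℝ).toMultilinearMap.toLinearMap
      (fun i => M i) r) with hLdef
  have hL : ∀ u : Fin m → ℝ, (M.updateRow r u).det = L u := by
    intro u
    simp only [hLdef, MultilinearMap.toLinearMap_apply]
    rfl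
  have hcont : HasDerivAt (fun y => L (g y)) (L.toContinuousLinearMap g') s := by
    exact (L.toContinuousLinearMap.hasFDerivAt).comp_hasDerivAt s hg
  simp only [hL]
  simpa using hcont

lemma eventually_zero_of_deriv_iterate (g : ℝ → ℝ) (x : ℝ) (hg : AnalyticAt ℝ g x)
    (h : ∀ m : ℕ, deriv^[m] g x = 0) : ∀ᶠ y in nhds x, g y = 0 := by
  obtain ⟨p, hp⟩ := hg
  have hp0 : p = 0 := by
    funext m
    refine ContinuousMultilinearMap.ext fun c => ?_
    obtain ⟨r, hr⟩ := hp
    have h1 := hr.factorial_smul (1 : ℝ) m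
    have h2 : iteratedFDeriv ℝ m g x (fun _ => (1 : ℝ)) = 0 := by
      rw [← iteratedDeriv_eq_iteratedFDeriv, iteratedDeriv_eq_iterate]
      exact h m
    rw [h2] at h1
    have h3 : p m (fun _ => (1 : ℝ)) = 0 := by
      have := h1
      rw [smul_eq_zero] at this
      rcases this with h4 | h4
      · exact absurd h4 (Nat.factorial_ne_zero m)
      · exact h4
    have h5 : p m c = (∏ i, c i) • p m (fun _ => (1 : ℝ)) := by
      rw [← ContinuousMultilinearMap.map_smul_univ]
      congr 1
      funext i
      simp
    rw [h5, h3, smul_zero]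
    rfl
  rw [hp0] at hp
  exact hp.eventually_eq_zero

lemma exists_mul_ne_zero {N : ℕ} {B : Set (Fin N → ℝ)} (hB : IsOpen B)
    (hBc : IsPreconnected B) {g h : (Fin N → ℝ) → ℝ}
    (hg : AnalyticOnNhd ℝ g B) (hh : AnalyticOnNhd ℝ h B)
    (hg0 : ∃ z ∈ B, g z ≠ 0) (hh0 : ∃ z ∈ B, h z ≠ 0) :
    ∃ z ∈ B, g z * h z ≠ 0 := by
  by_contra hc
  push_neg at hc
  obtain ⟨z0, hz0B, hz0⟩ := hg0
  obtain ⟨z1, hz1B, hz1⟩ := hh0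
  have hnb : {z | g z ≠ 0} ∩ B ∈ nhds z0 := by
    apply Filter.inter_mem
    · exact (hg z0 hz0B).continuousAt.preimage_mem_nhds (isOpen_compl_singleton.mem_nhds hz0)
    · exact hB.mem_nhds hz0B
  have hev : h =ᶠ[nhds z0] 0 := by
    filter_upwards [hnb] with z hz
    have := hc z hz.2
    rcases mul_eq_zero.mp this with h1 | h1
    · exact absurd h1 hz.1
    · exact h1
  have := hh.eqOn_zero_of_preconnected_of_eventuallyEq_zero hBc hz0B hev
  exact hz1 (this hz1B)

/-- Matrix whose first `n` rows are `c ↦ (f c)^{(b i)}(t i)` and last row is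
`c ↦ (f c)'(t k)`. -/
noncomputable def MatD {n : ℕ} (f : Fin (n + 1) → ℝ → ℝ) (k : Fin n) (b : Fin n → ℕ)
    (t : Fin n → ℝ) : Matrix (Fin (n + 1)) (Fin (n + 1)) ℝ :=
  Matrix.of (Fin.snoc (fun i => fun c => deriv^[b i] (f c) (t i))
    (fun c => deriv (f c) (t k)))

/-- Matrix whose first `n` rows are `c ↦ f c (t i)` and last row is `c ↦ f c y`. -/
noncomputable def MatG {n : ℕ} (f : Fin (n + 1) → ℝ → ℝ) (t : Fin n → ℝ) (y : ℝ) :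
    Matrix (Fin (n + 1)) (Fin (n + 1)) ℝ :=
  Matrix.of (Fin.snoc (fun i => fun c => f c (t i)) (fun c => f c y))

lemma MatD_castSucc {n : ℕ} (f : Fin (n + 1) → ℝ → ℝ) (k : Fin n) (b : Fin n → ℕ)
    (t : Fin n → ℝ) (i : Fin n) :
    MatD f k b t (Fin.castSucc i) = fun c => deriv^[b i] (f c) (t i) := by
  funext c
  simp [MatD]

lemma MatD_last {n : ℕ} (f : Fin (n + 1) → ℝ → ℝ) (k : Fin n) (b : Fin n → ℕ)
    (t : Fin n → ℝ) :
    MatD f k b t (Fin.last n) = fun c => deriv (f c) (t k) := by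
  funext c
  simp [MatD]

lemma MatD_updateRow {n : ℕ} (f : Fin (n + 1) → ℝ → ℝ) (k : Fin n) (b : Fin n → ℕ)
    (t : Fin n → ℝ) {i : Fin n} (hik : i ≠ k) (m : ℕ) (s : ℝ) :
    Matrix.updateRow (MatD f k b t) (Fin.castSucc i) (fun c => deriv^[m] (f c) s) =
      MatD f k (Function.update b i m) (Function.update t i s) := by
  ext r c
  refine Fin.lastCases ?_ (fun i' => ?_) r
  · rw [Matrix.updateRow_ne (Fin.ne_last_of_lt (Fin.castSucc_lt_last i)).symm]
    · rw [MatD_last, MatD_last, Function.update_of_ne (Ne.symm hik)]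
  · rcases eq_or_ne i' i with rfl | hne
    · rw [Matrix.updateRow_self, MatD_castSucc]
      simp
    · rw [Matrix.updateRow_ne (by simpa using hne), MatD_castSucc, MatD_castSucc,
        Function.update_of_ne hne, Function.update_of_ne hne]

lemma MatG_updateRow {n : ℕ} (f : Fin (n + 1) → ℝ → ℝ) (t : Fin n → ℝ) (y z : ℝ) :
    Matrix.updateRow (MatG f t z) (Fin.last n) (fun c => f c y) = MatG f t y := by
  ext r c
  refine Fin.lastCases ?_ (fun i' => ?_) r
  · rw [Matrix.updateRow_self]; simp [MatG]
  · rw [Matrix.updateRow_ne (Fin.ne_last_of_lt (Fin.castSucc_lt_last i'))]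
    simp [MatG]

lemma MatG_updateRow_deriv {n : ℕ} (f : Fin (n + 1) → ℝ → ℝ) (k : Fin n) (t : Fin n → ℝ)
    (z : ℝ) :
    Matrix.updateRow (MatG f t z) (Fin.last n) (fun c => deriv (f c) (t k)) =
      MatD f k (fun _ => 0) t := by
  ext r c
  refine Fin.lastCases ?_ (fun i' => ?_) r
  · rw [Matrix.updateRow_self, MatD_last]
  · rw [Matrix.updateRow_ne (Fin.ne_last_of_lt (Fin.castSucc_lt_last i'))]
    simp [MatG, MatD]

lemma MatD_det_analytic {n : ℕ} {U : Set ℝ} (f : Fin (n + 1) → ℝ → ℝ)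
    (han : ∀ i, AnalyticOnNhd ℝ (f i) U) (k : Fin n) (b : Fin n → ℕ) :
    AnalyticOnNhd ℝ (fun t => (MatD f k b t).det) (Set.univ.pi fun _ : Fin n => U) := by
  have hAn : ∀ (m : ℕ) (c : Fin (n + 1)), AnalyticOnNhd ℝ (deriv^[m] (f c)) U :=
    fun m c => (han c).iterated_deriv m
  intro t ht
  rw [Set.mem_univ_pi] at ht
  have hentry : ∀ (r : Fin (n + 1)) (c : Fin (n + 1)),
      AnalyticAt ℝ (fun t' : Fin n → ℝ => MatD f k b t' r c) t := by
    intro r c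
    refine Fin.lastCases ?_ (fun i => ?_) r
    · have : (fun t' : Fin n → ℝ => MatD f k b t' (Fin.last n) c) =
        (deriv^[1] (f c)) ∘ ⇑(ContinuousLinearMap.proj (R := ℝ) (φ := fun _ : Fin n => ℝ) k) := by
        funext t'; rw [MatD_last]; simp
      rw [this]
      exact AnalyticAt.comp (x := t)
        (f := ⇑(ContinuousLinearMap.proj (R := ℝ) (φ := fun _ : Fin n => ℝ) k))
        ((hAn 1 c) (t k) (ht k))
        ((ContinuousLinearMap.proj (R := ℝ) (φ := fun _ : Fin n => ℝ) k).analyticAt t)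
    · have : (fun t' : Fin n → ℝ => MatD f k b t' (Fin.castSucc i) c) =
        (deriv^[b i] (f c)) ∘ ⇑(ContinuousLinearMap.proj (R := ℝ) (φ := fun _ : Fin n => ℝ) i) := by
        funext t'; rw [MatD_castSucc]; rfl
      rw [this]
      exact AnalyticAt.comp (x := t)
        (f := ⇑(ContinuousLinearMap.proj (R := ℝ) (φ := fun _ : Fin n => ℝ) i))
        ((hAn (b i) c) (t i) (ht i))
        ((ContinuousLinearMap.proj (R := ℝ) (φ := fun _ : Fin n => ℝ) i).analyticAt t)
  have : (fun t' => (MatD f k b t').det) = fun t' =>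
      ∑ σ : Equiv.Perm (Fin (n + 1)), ((Equiv.Perm.sign σ : ℤ) : ℝ) *
        ∏ i, MatD f k b t' (σ i) i := by
    funext t'
    rw [Matrix.det_apply]
    congr 1
    funext σ
    rw [Units.smul_def, zsmul_eq_mul]
  rw [this]
  apply Finset.analyticAt_fun_sum
  intro σ _
  exact analyticAt_const.mul (Finset.analyticAt_fun_prod _ (fun i _ => hentry (σ i) i))

lemma pair_dep {N : ℕ} (v0 v1 : Fin (N + 1) → ℝ) (S : Set (Fin (N + 1) → ℝ))
    (hS : Submodule.span ℝ S = ⊤) (kc : Fin (N + 1)) (hkc : kc ≠ Fin.last N)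
    (hdet : ∀ w : Fin (N + 1) → (Fin (N + 1) → ℝ), w kc = v0 → w (Fin.last N) = v1 →
      (∀ l, l ≠ kc → l ≠ Fin.last N → w l ∈ S) → (Matrix.of w).det = 0) :
    ¬ LinearIndependent ℝ ![v0, v1] := by
  classical
  intro hli2
  have hv01 : v0 ≠ v1 := by
    intro e
    have h01 := hli2.injective (a₁ := 0) (a₂ := 1) (by simp [e])
    simp at h01
  obtain ⟨b, hbt, hsb, htb, hbli⟩ := exists_linearIndepOn_id_extension
    ((linearIndepOn_id_range_iff hli2.injective).mpr hli2) (Set.subset_union_right (s := S))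
  replace hbli : LinearIndependent ℝ ((↑) : b → (Fin (N + 1) → ℝ)) := hbli
  have hspanb : ⊤ ≤ Submodule.span ℝ b := by
    rw [← hS]
    refine Submodule.span_le.mpr fun z hz => htb (Set.mem_union_left _ hz)
  have hfin : b.Finite := hbli.setFinite
  haveI : Fintype ↥b := hfin.fintype
  set B : Module.Basis ↥b ℝ (Fin (N + 1) → ℝ) := Module.Basis.mk hbli (by rwa [Subtype.range_coe]) with hB
  have hcard : Fintype.card ↥b = N + 1 := by
    rw [← Module.finrank_eq_card_basis B, Module.finrank_fin_fun]
  set e0 : ↥b ≃ Fin (N + 1) := Fintype.equivFinOfCardEq hcard with he0def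
  have hv0b : v0 ∈ b := hsb ⟨0, rfl⟩
  have hv1b : v1 ∈ b := hsb ⟨1, rfl⟩
  set i0 : Fin (N + 1) := e0 ⟨v0, hv0b⟩ with hi0
  set i1 : Fin (N + 1) := e0 ⟨v1, hv1b⟩ with hi1
  have hi01 : i0 ≠ i1 := by
    intro e
    exact hv01 (congrArg Subtype.val (e0.injective e))
  set d : Equiv.Perm (Fin (N + 1)) := Equiv.swap kc i0 with hd
  set w' : Fin (N + 1) := d i1 with hw'def
  have hw' : w' ≠ kc := by
    intro e
    have : i1 = d kc := by
      have := congrArg d e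
      rwa [hw'def, Equiv.swap_apply_self] at this
    rw [hd, Equiv.swap_apply_left] at this
    exact hi01 this.symm
  set s : Equiv.Perm (Fin (N + 1)) := Equiv.swap (Fin.last N) w' with hs
  set e : Equiv.Perm (Fin (N + 1)) := s.trans d with he
  have he0 : e kc = i0 := by
    rw [he, Equiv.trans_apply, hs, Equiv.swap_apply_of_ne_of_ne hkc (Ne.symm hw'),
      hd, Equiv.swap_apply_left]
  have he1 : e (Fin.last N) = i1 := by
    rw [he, Equiv.trans_apply, hs, Equiv.swap_apply_left, hw'def, Equiv.swap_apply_self]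
  set M : Fin (N + 1) → (Fin (N + 1) → ℝ) := fun r => B (e0.symm (e r)) with hMdef
  have hM : ∀ r, M r = ((e0.symm (e r)) : Fin (N + 1) → ℝ) := by
    intro r
    simp only [hMdef, hB, Module.Basis.mk_apply]
  have hMkc : M kc = v0 := by
    rw [hM, he0, hi0, Equiv.symm_apply_apply]
  have hMlast : M (Fin.last N) = v1 := by
    rw [hM, he1, hi1, Equiv.symm_apply_apply]
  have hMS : ∀ l, l ≠ kc → l ≠ Fin.last N → M l ∈ S := by
    intro l h1 h2
    have hmem : M l ∈ b := by rw [hM]; exact (e0.symm (e l)).2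
    rcases hbt hmem with hS' | hr
    · exact hS'
    · exfalso
      obtain ⟨i2, hi2⟩ := hr
      fin_cases i2
      · apply h1
        have : M l = v0 := by simpa using hi2.symm
        have hsub : e0.symm (e l) = ⟨v0, hv0b⟩ := Subtype.ext (by rw [← hM]; exact this)
        have : e l = i0 := by rw [hi0, ← hsub, Equiv.apply_symm_apply]
        exact e.injective (by rw [this, ← he0])
      · apply h2
        have : M l = v1 := by simpa using hi2.symm
        have hsub : e0.symm (e l) = ⟨v1, hv1b⟩ := Subtype.ext (by rw [← hM]; exact this)
        have : e l = i1 := by rw [hi1, ← hsub, Equiv.apply_symm_apply]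
        exact e.injective (by rw [this, ← he1])
  have hdet0 := hdet M hMkc hMlast hMS
  have hMli : LinearIndependent ℝ M := by
    have := hbli.comp (fun r => e0.symm (e r)) (e0.symm.injective.comp e.injective)
    have heq : M = fun r => ((e0.symm (e r) : ↥b) : Fin (N + 1) → ℝ) := funext hM
    rw [heq]
    exact this
  have hunit : IsUnit (Matrix.of M) := by
    apply Matrix.linearIndependent_rows_iff_isUnit.mp
    exact hMli
  exact (((Matrix.isUnit_iff_isUnit_det _).mp hunit).ne_zero) hdet0

/-- Given `n+1` linearly independent real-analytic functions `f₀, …, f_n` on an open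
interval `U`, one of which has constant sign on `U`, there are constants `C₀, …, C_n`
such that `f = ∑ Cᵢ fᵢ` has at least `n` simple zeros in `U`. -/
theorem exists_combination_with_simple_zeros (n : ℕ) (U : Set ℝ)
    (hUopen : IsOpen U) (hUconn : U.OrdConnected)
    (f : Fin (n + 1) → ℝ → ℝ) (han : ∀ i, AnalyticOnNhd ℝ (f i) U)
    (hli : ∀ c : Fin (n + 1) → ℝ, (∀ x ∈ U, ∑ i, c i * f i x = 0) → ∀ i, c i = 0)
    (j : Fin (n + 1)) (hsign : (∀ x ∈ U, 0 < f j x) ∨ (∀ x ∈ U, f j x < 0)) :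
    ∃ C : Fin (n + 1) → ℝ, ∃ x : Fin n → ℝ, Function.Injective x ∧
      ∀ k, x k ∈ U ∧ (∑ i, C i * f i (x k)) = 0 ∧
        deriv (fun y => ∑ i, C i * f i y) (x k) ≠ 0 := by
  classical
  rcases Nat.eq_zero_or_pos n with hn0 | hn
  · subst hn0
    exact ⟨fun _ => 0, fun k => k.elim0, fun a => a.elim0, fun k => k.elim0⟩
  -- U is nonempty
  have hUne : U.Nonempty := by
    by_contra hne
    rw [Set.not_nonempty_iff_eq_empty] at hne
    have := hli (fun _ => 1) (by intro x hx; rw [hne] at hx; exact absurd hx (Set.notMem_empty x)) 0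
    norm_num at this
  obtain ⟨x₀, hx₀⟩ := hUne
  have hUconv : Convex ℝ U := convex_iff_ordConnected.mpr hUconn
  have hUpre : IsPreconnected U := hUconv.isPreconnected
  have hboxopen : IsOpen (Set.univ.pi fun _ : Fin n => U) :=
    isOpen_set_pi Set.finite_univ (fun i _ => hUopen)
  have hboxpre : IsPreconnected (Set.univ.pi fun _ : Fin n => U) :=
    (convex_pi (fun i _ => hUconv)).isPreconnected
  have hAn : ∀ (m : ℕ) (c : Fin (n + 1)), AnalyticOnNhd ℝ (deriv^[m] (f c)) U :=
    fun m c => (han c).iterated_deriv m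
  have hdiff : ∀ (m : ℕ) (c : Fin (n + 1)), ∀ x ∈ U, DifferentiableAt ℝ (deriv^[m] (f c)) x :=
    fun m c x hx => ((hAn m c) x hx).differentiableAt
  have hrowderiv : ∀ (m : ℕ) (x : ℝ), x ∈ U →
      HasDerivAt (fun y => (fun c => deriv^[m] (f c) y)) (fun c => deriv^[m + 1] (f c) x) x := by
    intro m x hx
    apply hasDerivAt_pi.mpr
    intro c
    have := (hdiff m c x hx).hasDerivAt
    rwa [show deriv^[m + 1] (f c) x = deriv (deriv^[m] (f c)) x from by
      rw [Function.iterate_succ_apply']] 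
  -- iterated derivatives of linear combinations
  have hIterSum : ∀ (co : Fin (n + 1) → ℝ) (m : ℕ), ∀ x ∈ U,
      deriv^[m] (fun y => ∑ i, co i * f i y) x = ∑ i, co i * deriv^[m] (f i) x := by
    intro co m
    induction m with
    | zero => intro x hx; simp
    | succ m ih =>
      intro x hx
      rw [Function.iterate_succ_apply']
      have hev : deriv^[m] (fun y => ∑ i, co i * f i y) =ᶠ[nhds x]
          (fun y => ∑ i, co i * deriv^[m] (f i) y) := by
        filter_upwards [hUopen.mem_nhds hx] with y hy using ih y hy
      rw [hev.deriv_eq]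
      rw [deriv_fun_sum (fun i _ => ((hdiff m i x hx).const_mul (co i)))]
      apply Finset.sum_congr rfl
      intro i _
      rw [deriv_const_mul _ (hdiff m i x hx), Function.iterate_succ_apply']
  -- the derivatives at any point span everything
  have hspan : ∀ x ∈ U,
      Submodule.span ℝ (Set.range (fun m : ℕ => (fun c => deriv^[m] (f c) x))) = ⊤ := by
    intro x hx
    by_contra hne
    obtain ⟨φ, hφne, hφ⟩ := Submodule.exists_dual_map_eq_bot_of_lt_top
      (lt_top_iff_ne_top.mpr hne) inferInstance
    set co : Fin (n + 1) → ℝ := fun i => φ (fun l => if i = l then 1 else 0) with hco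
    have hφapp : ∀ u : Fin (n + 1) → ℝ, φ u = ∑ i, u i * co i := by
      intro u
      rw [LinearMap.pi_apply_eq_sum_univ φ u]
      apply Finset.sum_congr rfl
      intro i _
      rw [smul_eq_mul, hco]
    have hker : ∀ m : ℕ, ∑ i, (deriv^[m] (f i) x) * co i = 0 := by
      intro m
      have hmem : (fun c => deriv^[m] (f c) x) ∈
          Submodule.span ℝ (Set.range (fun m : ℕ => (fun c => deriv^[m] (f c) x))) :=
        Submodule.subset_span ⟨m, rfl⟩
      have h2 : φ (fun c => deriv^[m] (f c) x) ∈
          Submodule.map φ (Submodule.span ℝ (Set.range (fun m : ℕ => (fun c => deriv^[m] (f c) x)))) :=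
        Submodule.mem_map_of_mem hmem
      rw [hφ] at h2
      have h3 := (Submodule.mem_bot ℝ).mp h2
      rw [hφapp] at h3
      exact h3
    have hcoz : ∀ i, co i = 0 := by
      apply hli co
      intro y hy
      have hg : AnalyticOnNhd ℝ (fun y => ∑ i, co i * f i y) U := by
        intro z hz
        exact Finset.analyticAt_fun_sum _ (fun i _ => analyticAt_const.mul ((han i) z hz))
      have hderz : ∀ m : ℕ, deriv^[m] (fun y => ∑ i, co i * f i y) x = 0 := by
        intro m
        rw [hIterSum co m x hx]
        rw [show ∑ i, co i * deriv^[m] (f i) x = ∑ i, (deriv^[m] (f i) x) * co i from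
          Finset.sum_congr rfl fun i _ => mul_comm _ _]
        exact hker m
      have hev := eventually_zero_of_deriv_iterate _ x (hg x hx) hderz
      have := hg.eqOn_zero_of_preconnected_of_eventuallyEq_zero hUpre hx hev
      exact this hy
    apply hφne
    apply LinearMap.ext
    intro u
    rw [hφapp]
    simp [hcoz]
  -- main nonvanishing of the determinant functions
  have hDne : ∀ k : Fin n, ∃ t ∈ (Set.univ.pi fun _ : Fin n => U),
      (MatD f k (fun _ => 0) t).det ≠ 0 := by
    intro k
    by_contra hcon
    push_neg at hcon
    -- iterated differentiation
    have key : ∀ (m : ℕ) (b : Fin n → ℕ), (∑ i, b i) = m → b k = 0 →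
        ∀ t, (∀ l, t l ∈ U) → (MatD f k b t).det = 0 := by
      intro m
      induction m with
      | zero =>
        intro b hsum hbk t ht
        have hb0 : b = fun _ => 0 := by
          funext i
          exact (Finset.sum_eq_zero_iff.mp hsum) i (Finset.mem_univ i)
        rw [hb0]
        exact hcon t (Set.mem_univ_pi.mpr ht)
      | succ m ih =>
        intro b hsum hbk t ht
        have hex : ∃ i, b i ≠ 0 := by
          by_contra hc
          push_neg at hc
          simp only [hc, Finset.sum_const_zero] at hsum
          exact Nat.succ_ne_zero m hsum.symm
        obtain ⟨i, hbi⟩ := hex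
        have hik : i ≠ k := fun e => hbi (e ▸ hbk)
        set b' := Function.update b i (b i - 1) with hb'
        have hb'k : b' k = 0 := by
          rw [hb', Function.update_of_ne (Ne.symm hik)]
          exact hbk
        have hb'i : b' i = b i - 1 := by rw [hb', Function.update_self]
        have hb'sum : ∑ l, b' l = m := by
          have h1 : ∑ l, b l = b i + ∑ l ∈ Finset.univ.erase i, b l := by
            rw [Finset.add_sum_erase _ _ (Finset.mem_univ i)]
          have h2 : ∑ l, b' l = b' i + ∑ l ∈ Finset.univ.erase i, b' l := by
            rw [Finset.add_sum_erase _ _ (Finset.mem_univ i)]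
          have h3 : ∑ l ∈ Finset.univ.erase i, b' l = ∑ l ∈ Finset.univ.erase i, b l := by
            apply Finset.sum_congr rfl
            intro l hl
            rw [hb', Function.update_of_ne (Finset.ne_of_mem_erase hl)]
          rw [h2, h3, hb'i]
          rw [h1] at hsum
          omega
        have hE : ∀ s ∈ U, (MatD f k b' (Function.update t i s)).det = 0 := by
          intro s hs
          apply ih b' hb'sum hb'k
          intro l
          rcases eq_or_ne l i with rfl | hne
          · rwa [Function.update_self]
          · rw [Function.update_of_ne hne]; exact ht l
        have hup : ∀ s : ℝ, MatD f k b' (Function.update t i s) =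
            Matrix.updateRow (MatD f k b' t) (Fin.castSucc i) (fun c => deriv^[b' i] (f c) s) := by
          intro s
          rw [MatD_updateRow f k b' t hik (b' i) s, Function.update_eq_self]
        have heqf : (fun s => (MatD f k b' (Function.update t i s)).det) =
            (fun s => ((MatD f k b' t).updateRow (Fin.castSucc i)
              (fun c => deriv^[b' i] (f c) s)).det) := by
          funext s
          rw [hup s]
        have hd0 := hasDerivAt_det_updateRow (MatD f k b' t) (Fin.castSucc i)
          (fun s => fun c => deriv^[b' i] (f c) s) (fun c => deriv^[b' i + 1] (f c) (t i))
          (t i) (hrowderiv (b' i) (t i) (ht i))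
        have hder : HasDerivAt (fun s => (MatD f k b' (Function.update t i s)).det)
            (((MatD f k b' t).updateRow (Fin.castSucc i)
              (fun c => deriv^[b' i + 1] (f c) (t i))).det) (t i) := by
          rw [heqf]
          exact hd0
        have h0 : HasDerivAt (fun s => (MatD f k b' (Function.update t i s)).det) 0 (t i) := by
          have hev : (fun s => (MatD f k b' (Function.update t i s)).det) =ᶠ[nhds (t i)]
              (fun _ => 0) := by
            filter_upwards [hUopen.mem_nhds (ht i)] with s hs using hE s hs
          exact (hasDerivAt_const (t i) (0 : ℝ)).congr_of_eventuallyEq hev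
        have hzero := hder.unique h0
        have hconv : Matrix.updateRow (MatD f k b' t) (Fin.castSucc i)
            (fun c => deriv^[b' i + 1] (f c) (t i)) = MatD f k b t := by
          have hbb : Function.update b' i (b' i + 1) = b := by
            funext l
            rcases eq_or_ne l i with rfl | hne
            · rw [Function.update_self, hb'i]
              omega
            · rw [Function.update_of_ne hne, hb', Function.update_of_ne hne]
          rw [MatD_updateRow f k b' t hik (b' i + 1) (t i), Function.update_eq_self, hbb]
        rw [← hconv]
        exact hzero
    -- pointwise consequence
    have hpoint : ∀ (a : Fin n → ℕ), a k = 0 → ∀ x ∈ U,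
        (MatD f k a (fun _ => x)).det = 0 :=
      fun a hak x hx => key (∑ i, a i) a rfl hak _ (fun _ => hx)
    -- all 2x2 minors of (f, f') vanish on U
    have hdep : ∀ x ∈ U, ∀ c c' : Fin (n + 1),
        f c x * deriv (f c') x - f c' x * deriv (f c) x = 0 := by
      intro x hx
      have hdet : ∀ w : Fin (n + 1) → (Fin (n + 1) → ℝ),
          w (Fin.castSucc k) = (fun c => f c x) → w (Fin.last n) = (fun c => deriv (f c) x) →
          (∀ l, l ≠ Fin.castSucc k → l ≠ Fin.last n →
            w l ∈ Set.range (fun m : ℕ => (fun c => deriv^[m] (f c) x))) →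
          (Matrix.of w).det = 0 := by
        intro w hwk hwl hwS
        set a : Fin n → ℕ := fun i => if h : i = k then 0 else
          Classical.choose (hwS (Fin.castSucc i)
            (fun e => h (Fin.castSucc_injective n e)) (Fin.ne_last_of_lt (Fin.castSucc_lt_last i)))
          with ha
        have haz : a k = 0 := by rw [ha]; simp
        have hwM : Matrix.of w = MatD f k a (fun _ => x) := by
          ext r c
          refine Fin.lastCases ?_ (fun i => ?_) r
          · rw [MatD_last]
            show w (Fin.last n) c = _
            rw [hwl]
          · rw [MatD_castSucc]
            show w (Fin.castSucc i) c = _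
            rcases eq_or_ne i k with rfl | hne
            · rw [hwk, haz]
              simp
            · have hspec := Classical.choose_spec (hwS (Fin.castSucc i)
                (fun e => hne (Fin.castSucc_injective n e))
                (Fin.ne_last_of_lt (Fin.castSucc_lt_last i)))
              have hai : a i = Classical.choose (hwS (Fin.castSucc i)
                (fun e => hne (Fin.castSucc_injective n e))
                (Fin.ne_last_of_lt (Fin.castSucc_lt_last i))) := by
                rw [ha]; simp [hne]
              rw [hai]
              exact congrFun hspec.symm c
        rw [hwM]
        exact hpoint a haz x hx
      have hnli := pair_dep (fun c => f c x) (fun c => deriv (f c) x)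
        (Set.range (fun m : ℕ => (fun c => deriv^[m] (f c) x))) (hspan x hx)
        (Fin.castSucc k) (Fin.ne_last_of_lt (Fin.castSucc_lt_last k)) hdet
      rw [linearIndependent_fin2] at hnli
      push_neg at hnli
      simp only [Matrix.cons_val_one, Matrix.head_cons, Matrix.cons_val_zero] at hnli
      intro c c'
      by_cases hv1 : (fun c => deriv (f c) x) = (0 : Fin (n + 1) → ℝ)
      · have h1 : deriv (f c) x = 0 := congrFun hv1 c
        have h2 : deriv (f c') x = 0 := congrFun hv1 c'
        rw [h1, h2]
        ring
      · obtain ⟨aa, haa⟩ := hnli hv1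
        have h1 : aa * deriv (f c) x = f c x := congrFun haa c
        have h2 : aa * deriv (f c') x = f c' x := congrFun haa c'
        rw [← h1, ← h2]
        ring
    -- build the contradiction with linear independence using the sign function f j
    have hz0 : (0 : ℕ) < n + 1 := by omega
    have hz1 : (1 : ℕ) < n + 1 := by omega
    set idx : Fin (n + 1) := if j = ⟨0, hz0⟩ then ⟨1, hz1⟩ else ⟨0, hz0⟩ with hidxdef
    have hidx : idx ≠ j := by
      rw [hidxdef]
      by_cases h : j = ⟨0, hz0⟩
      · rw [if_pos h, h]
        intro e
        have := congrArg Fin.val e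
        norm_num at this
      · rw [if_neg h]
        exact fun e => h e.symm
    have hfj : ∀ y ∈ U, f j y ≠ 0 := by
      intro y hy
      rcases hsign with h | h
      · exact (h y hy).ne'
      · exact (h y hy).ne
    have hratio : ∀ y ∈ U, HasDerivAt (fun z => f idx z / f j z) 0 y := by
      intro y hy
      have h1 := ((han idx) y hy).differentiableAt.hasDerivAt
      have h2 := ((han j) y hy).differentiableAt.hasDerivAt
      have hd := h1.div h2 (hfj y hy)
      have hnum : (deriv (f idx) y * f j y - f idx y * deriv (f j) y) / (f j y) ^ 2 = 0 := by
        have := hdep y hy idx j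
        have hnum0 : deriv (f idx) y * f j y - f idx y * deriv (f j) y = 0 := by linarith
        rw [hnum0, zero_div]
      rwa [hnum] at hd
    have hconst : ∀ y ∈ U, f idx y / f j y = f idx x₀ / f j x₀ := by
      intro y hy
      apply hUconv.is_const_of_fderivWithin_eq_zero
        (fun z hz => ((hratio z hz).differentiableAt).differentiableWithinAt)
        (fun z hz => ?_) hy hx₀
      rw [fderivWithin_of_isOpen hUopen hz, (hratio z hz).hasFDerivAt.fderiv]
      apply ContinuousLinearMap.ext
      intro u
      simp
    set cc : ℝ := f idx x₀ / f j x₀ with hccdef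
    have hlin : ∀ y ∈ U, f idx y = cc * f j y := by
      intro y hy
      have := hconst y hy
      rw [div_eq_iff (hfj y hy)] at this
      rw [this]
    set co : Fin (n + 1) → ℝ := fun l => if l = idx then 1 else if l = j then -cc else 0 with hcodef
    have hcosum : ∀ y ∈ U, ∑ l, co l * f l y = 0 := by
      intro y hy
      have hterm : ∀ l, co l * f l y =
          (if l = idx then f idx y else 0) + (if l = j then -cc * f j y else 0) := by
        intro l
        rcases eq_or_ne l idx with rfl | h1
        · simp [hcodef, (Ne.symm hidx : ¬ (j = idx)), hidx]
        · rcases eq_or_ne l j with rfl | h2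
          · simp [hcodef, h1]
          · simp [hcodef, h1, h2]
      rw [Finset.sum_congr rfl fun l _ => hterm l, Finset.sum_add_distrib]
      rw [Finset.sum_ite_eq' Finset.univ idx (fun _ => f idx y)]
      rw [Finset.sum_ite_eq' Finset.univ j (fun _ => -cc * f j y)]
      simp only [Finset.mem_univ, if_true]
      rw [hlin y hy]
      ring
    have h1 := hli co hcosum idx
    rw [hcodef] at h1
    simp at h1
  -- pick a point where all determinants are nonzero and coordinates are distinct
  have hP0ne : ∃ t ∈ (Set.univ.pi fun _ : Fin n => U),
      (∏ p ∈ Finset.univ.filter (fun p : Fin n × Fin n => p.1 ≠ p.2), (t p.1 - t p.2)) ≠ 0 := by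
    obtain ⟨ε, hε, hball⟩ := Metric.isOpen_iff.mp hUopen x₀ hx₀
    have hn' : (0 : ℝ) < (n : ℝ) := by exact_mod_cast hn
    have hq : (0 : ℝ) < ε / (2 * n) := div_pos hε (by linarith)
    set t0 : Fin n → ℝ := fun i => x₀ + (i : ℕ) * (ε / (2 * n)) with ht0
    have ht0U : ∀ i, t0 i ∈ U := by
      intro i
      apply hball
      rw [Metric.mem_ball, Real.dist_eq]
      have hi : ((i : ℕ) : ℝ) < (n : ℝ) := by exact_mod_cast i.isLt
      have h1 : ((i : ℕ) : ℝ) * (ε / (2 * n)) < (n : ℝ) * (ε / (2 * n)) :=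
        mul_lt_mul_of_pos_right hi hq
      have h2 : (n : ℝ) * (ε / (2 * n)) = ε / 2 := by
        field_simp
      have ht0i : t0 i - x₀ = ((i : ℕ) : ℝ) * (ε / (2 * n)) := by simp [ht0]
      rw [ht0i, abs_of_nonneg (mul_nonneg (Nat.cast_nonneg _) (le_of_lt hq))]
      calc ((i : ℕ) : ℝ) * (ε / (2 * n)) < (n : ℝ) * (ε / (2 * n)) := h1
        _ = ε / 2 := h2
        _ < ε := by linarith
    have ht0inj : Function.Injective t0 := by
      intro a b hab
      rw [ht0] at hab
      have : ((a : ℕ) : ℝ) * (ε / (2 * n)) = ((b : ℕ) : ℝ) * (ε / (2 * n)) := by linarith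
      have := mul_right_cancel₀ hq.ne' this
      exact Fin.ext (by exact_mod_cast this)
    refine ⟨t0, Set.mem_univ_pi.mpr ht0U, ?_⟩
    rw [Finset.prod_ne_zero_iff]
    intro p hp
    rw [Finset.mem_filter] at hp
    exact sub_ne_zero.mpr (fun e => hp.2 (ht0inj e))
  have hall : ∀ s : Finset (Fin n), ∃ t ∈ (Set.univ.pi fun _ : Fin n => U),
      ((∏ p ∈ Finset.univ.filter (fun p : Fin n × Fin n => p.1 ≠ p.2), (t p.1 - t p.2)) *
        ∏ k ∈ s, (MatD f k (fun _ => 0) t).det) ≠ 0 := by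
    intro s
    induction s using Finset.induction_on with
    | empty => simpa using hP0ne
    | @insert a s ha ih =>
      have hP0an : AnalyticOnNhd ℝ (fun t : Fin n → ℝ =>
          (∏ p ∈ Finset.univ.filter (fun p : Fin n × Fin n => p.1 ≠ p.2), (t p.1 - t p.2)) *
          ∏ k ∈ s, (MatD f k (fun _ => 0) t).det) (Set.univ.pi fun _ : Fin n => U) := by
        intro t ht
        apply AnalyticAt.mul
        · apply Finset.analyticAt_fun_prod
          intro p _
          exact AnalyticAt.sub
            ((ContinuousLinearMap.proj (R := ℝ) (φ := fun _ : Fin n => ℝ) p.1).analyticAt t)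
            ((ContinuousLinearMap.proj (R := ℝ) (φ := fun _ : Fin n => ℝ) p.2).analyticAt t)
        · exact Finset.analyticAt_fun_prod _ (fun k _ => MatD_det_analytic f han k _ t ht)
      have hDan : AnalyticOnNhd ℝ (fun t : Fin n → ℝ => (MatD f a (fun _ => 0) t).det)
          (Set.univ.pi fun _ : Fin n => U) := MatD_det_analytic f han a _
      obtain ⟨z, hzB, hz⟩ := exists_mul_ne_zero hboxopen hboxpre hP0an hDan ih (hDne a)
      refine ⟨z, hzB, ?_⟩
      have heq : (∏ p ∈ Finset.univ.filter (fun p : Fin n × Fin n => p.1 ≠ p.2), (z p.1 - z p.2)) *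
          ∏ k ∈ insert a s, (MatD f k (fun _ => 0) z).det =
          ((∏ p ∈ Finset.univ.filter (fun p : Fin n × Fin n => p.1 ≠ p.2), (z p.1 - z p.2)) *
            ∏ k ∈ s, (MatD f k (fun _ => 0) z).det) * (MatD f a (fun _ => 0) z).det := by
        rw [Finset.prod_insert ha]
        ring
      rw [heq]
      exact mul_ne_zero (fun e => hz (by rw [e, zero_mul])) (fun e => hz (by rw [e, mul_zero]))
  obtain ⟨t, htB, htne⟩ := hall Finset.univ
  have htU : ∀ l, t l ∈ U := fun l => (Set.mem_univ_pi.mp htB) l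
  have hP0t : (∏ p ∈ Finset.univ.filter (fun p : Fin n × Fin n => p.1 ≠ p.2),
      (t p.1 - t p.2)) ≠ 0 := fun e => htne (by rw [e, zero_mul])
  have hDt : ∀ k : Fin n, (MatD f k (fun _ => 0) t).det ≠ 0 := by
    have h2 : (∏ k : Fin n, (MatD f k (fun _ => 0) t).det) ≠ 0 :=
      fun e => htne (by rw [e, mul_zero])
    intro k
    exact Finset.prod_ne_zero_iff.mp h2 k (Finset.mem_univ k)
  have htinj : Function.Injective t := by
    intro a b hab
    by_contra hne
    apply hP0t
    apply Finset.prod_eq_zero (i := (a, b))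
    · exact Finset.mem_filter.mpr ⟨Finset.mem_univ _, hne⟩
    · exact sub_eq_zero.mpr hab
  set C : Fin (n + 1) → ℝ := fun c => (-1 : ℝ) ^ ((n : ℕ) + (c : ℕ)) *
      ((MatG f t 0).submatrix (Fin.last n).succAbove c.succAbove).det with hC
  have hFF : ∀ y : ℝ, (MatG f t y).det = ∑ c, C c * f c y := by
    intro y
    rw [Matrix.det_succ_row (MatG f t y) (Fin.last n)]
    apply Finset.sum_congr rfl
    intro c _
    have h1 : MatG f t y (Fin.last n) c = f c y := by simp [MatG]
    have h2 : (MatG f t y).submatrix (Fin.last n).succAbove c.succAbove =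
        (MatG f t 0).submatrix (Fin.last n).succAbove c.succAbove := by
      ext r' c'
      simp only [Matrix.submatrix_apply]
      rw [Fin.succAbove_last]
      simp [MatG]
    rw [h1, h2, hC, Fin.val_last]
    ring
  refine ⟨C, t, htinj, fun k => ⟨htU k, ?_, ?_⟩⟩
  · rw [← hFF (t k)]
    apply Matrix.det_zero_of_row_eq (Fin.ne_last_of_lt (Fin.castSucc_lt_last k))
    funext c
    simp [MatG]
  · have hfun : (fun y => ∑ i, C i * f i y) = fun y => (MatG f t y).det :=
      funext fun y => (hFF y).symm
    rw [hfun]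
    have hupdate : (fun y => (MatG f t y).det) =
        fun y => ((MatG f t 0).updateRow (Fin.last n) (fun c => f c y)).det := by
      funext y
      rw [MatG_updateRow]
    rw [hupdate]
    have hd : HasDerivAt (fun y => ((MatG f t 0).updateRow (Fin.last n) (fun c => f c y)).det)
        (((MatG f t 0).updateRow (Fin.last n) (fun c => deriv (f c) (t k))).det) (t k) := by
      apply hasDerivAt_det_updateRow
      apply hasDerivAt_pi.mpr
      intro c
      exact ((han c) (t k) (htU k)).differentiableAt.hasDerivAt
    rw [hd.deriv, MatG_updateRow_deriv]
    exact hDt k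
end

section
/- For r > 1 set θ_r = arcsin(1/r), and define f₁(r) = r³ cos(θ_r), f₂(r) = r²(π + 2θ_r), f₃(r) = r²(π − 2θ_r), f₄(r) = r cos(θ_r), f₅(r) = sin(2θ_r). Then the functions f₁, f₂, f₃, f₄, f₅ are linearly independent on the interval (1, 3). -/
open Real

/-- The five functions `r³ cos θᵣ, r²(π + 2θᵣ), r²(π - 2θᵣ), r cos θᵣ, sin 2θᵣ`
(with `θᵣ = arcsin (1/r)`). -/
noncomputable def fTeoC : Fin 5 → ℝ → ℝ :=
  ![fun r => r ^ 3 * Real.cos (Real.arcsin (1 / r)),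
    fun r => r ^ 2 * (Real.pi + 2 * Real.arcsin (1 / r)),
    fun r => r ^ 2 * (Real.pi - 2 * Real.arcsin (1 / r)),
    fun r => r * Real.cos (Real.arcsin (1 / r)),
    fun r => Real.sin (2 * Real.arcsin (1 / r))]

/-- Auxiliary closed form for the linear combination. -/
noncomputable def gAux (c : Fin 5 → ℝ) (x : ℝ) : ℝ :=
  Real.sqrt (1 - (1/x)^2) * (c 0 * x^3 + c 3 * x + 2 * c 4 / x)
    + x^2 * ((c 1 + c 2) * Real.pi + (2*(c 1 - c 2)) * Real.arcsin (1/x))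

lemma gAux_eq (c : Fin 5 → ℝ) {x : ℝ} (hx : x ∈ Set.Ioo (1:ℝ) 3) :
    gAux c x = ∑ i, c i * fTeoC i x := by
  have hx0 : (0:ℝ) < x := lt_trans one_pos hx.1
  have h1 : (1:ℝ)/x ≤ 1 := by
    rw [div_le_one hx0]; linarith [hx.1]
  have h2 : (-1:ℝ) ≤ 1/x := by
    have : (0:ℝ) < 1/x := by positivity
    linarith
  simp only [fTeoC, gAux, Fin.sum_univ_five, Matrix.cons_val_zero, Matrix.cons_val_one,
    Matrix.head_cons, Matrix.cons_val_two, Matrix.tail_cons, Matrix.cons_val_three,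
    Matrix.cons_val_four, Real.cos_arcsin, Real.sin_two_mul, Real.sin_arcsin h2 h1]
  ring

/-- derivative of `gAux`. -/
lemma gAux_hasDeriv (c : Fin 5 → ℝ) {x : ℝ} (hx : x ∈ Set.Ioo (1:ℝ) 3) :
    HasDerivAt (gAux c)
      ((1/(2*Real.sqrt (1 - (1/x)^2)) * (2/x^3)) * (c 0 * x^3 + c 3 * x + 2 * c 4 / x)
        + Real.sqrt (1 - (1/x)^2) * (3 * c 0 * x^2 + c 3 - 2 * c 4 / x^2)
        + 2*x * ((c 1 + c 2) * Real.pi + (2*(c 1 - c 2)) * Real.arcsin (1/x))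
        + x^2 * ((2*(c 1 - c 2)) * (1 / Real.sqrt (1 - (1/x)^2) * (-(1/x^2))))) x := by
  have hx0 : (0:ℝ) < x := lt_trans one_pos hx.1
  have hxne : x ≠ 0 := ne_of_gt hx0
  have hu1 : (1:ℝ)/x < 1 := by rw [div_lt_one hx0]; exact hx.1
  have hu0 : (0:ℝ) < 1/x := by positivity
  have hw0 : (0:ℝ) < 1 - (1/x)^2 := by nlinarith
  -- derivative of 1/x
  have hinv : HasDerivAt (fun y : ℝ => 1/y) (-(1/x^2)) x := by
    simpa [one_div] using hasDerivAt_inv hxne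
  -- derivative of 1 - (1/x)^2
  have hw : HasDerivAt (fun y : ℝ => 1 - (1/y)^2) (2/x^3) x := by
    have := (hinv.pow 2).const_sub 1
    convert this using 1
    · rfl
    · rfl
    · rfl
    field_simp
    simp only [Nat.cast_ofNat, Nat.add_one_sub_one, pow_one]; field_simp
  -- derivative of sqrt(1 - (1/x)^2)
  have hs : HasDerivAt (fun y : ℝ => Real.sqrt (1 - (1/y)^2))
      (1/(2*Real.sqrt (1 - (1/x)^2)) * (2/x^3)) x :=
    (Real.hasDerivAt_sqrt (ne_of_gt hw0)).comp x hw
  -- derivative of P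
  have hP : HasDerivAt (fun y : ℝ => c 0 * y^3 + c 3 * y + 2 * c 4 / y)
      (3 * c 0 * x^2 + c 3 - 2 * c 4 / x^2) x := by
    have h3 : HasDerivAt (fun y : ℝ => y^3) (3*x^2) x := by
      simpa using hasDerivAt_pow 3 x
    have := ((h3.const_mul (c 0)).add ((hasDerivAt_id x).const_mul (c 3))).add
      (hinv.const_mul (2 * c 4))
    convert this using 1
    · rfl
    · rfl
    · ext y; simp only [id_eq, Pi.add_apply]; ring
    · field_simp; ring
  -- derivative of arcsin (1/x)
  have harc : HasDerivAt (fun y : ℝ => Real.arcsin (1/y))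
      (1 / Real.sqrt (1 - (1/x)^2) * (-(1/x^2))) x :=
    (Real.hasDerivAt_arcsin (by linarith) (ne_of_lt hu1)).comp x hinv
  -- derivative of x^2
  have hsq : HasDerivAt (fun y : ℝ => y^2) (2*x) x := by
    simpa using hasDerivAt_pow 2 x
  have hL : HasDerivAt (fun y : ℝ => (c 1 + c 2) * Real.pi + (2*(c 1 - c 2)) * Real.arcsin (1/y))
      ((2*(c 1 - c 2)) * (1 / Real.sqrt (1 - (1/x)^2) * (-(1/x^2)))) x :=
    (harc.const_mul (2*(c 1 - c 2))).const_add ((c 1 + c 2) * Real.pi)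
  have := (hs.mul hP).add (hsq.mul hL)
  convert this using 1
  · rfl
  · rfl
  · rfl
  ring

lemma poly_coeffs {A B C D : ℝ}
    (h : ∀ x ∈ Set.Ioo (1:ℝ) 3, A*x^6 + B*x^4 + C*x^2 + D = 0) :
    A = 0 ∧ B = 0 ∧ C = 0 ∧ D = 0 := by
  have h1 := h (5/4) (by norm_num)
  have h2 := h (3/2) (by norm_num)
  have h3 := h 2 (by norm_num)
  have h4 := h (5/2) (by norm_num)
  norm_num at h1 h2 h3 h4
  refine ⟨?_, ?_, ?_, ?_⟩ <;> linarith

/-- The five functions are linearly independent on `(1, 3)`. -/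
theorem lin_indep_teoC :
    ∀ c : Fin 5 → ℝ,
      (∀ x ∈ Set.Ioo (1 : ℝ) 3, ∑ i, c i * fTeoC i x = 0) → ∀ i, c i = 0 := by
  intro c hc
  -- g vanishes on (1,3)
  have hg : ∀ x ∈ Set.Ioo (1:ℝ) 3, gAux c x = 0 := fun x hx => by
    rw [gAux_eq c hx]; exact hc x hx
  -- derivative of g vanishes on (1,3)
  have hd : ∀ x ∈ Set.Ioo (1:ℝ) 3,
      (1/(2*Real.sqrt (1 - (1/x)^2)) * (2/x^3)) * (c 0 * x^3 + c 3 * x + 2 * c 4 / x)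
        + Real.sqrt (1 - (1/x)^2) * (3 * c 0 * x^2 + c 3 - 2 * c 4 / x^2)
        + 2*x * ((c 1 + c 2) * Real.pi + (2*(c 1 - c 2)) * Real.arcsin (1/x))
        + x^2 * ((2*(c 1 - c 2)) * (1 / Real.sqrt (1 - (1/x)^2) * (-(1/x^2)))) = 0 := by
    intro x hx
    have h0 : HasDerivAt (gAux c) 0 x := by
      have heq : gAux c =ᶠ[nhds x] fun _ => (0:ℝ) := by
        filter_upwards [Ioo_mem_nhds hx.1 hx.2] with y hy
        exact hg y hy
      exact (hasDerivAt_const x (0:ℝ)).congr_of_eventuallyEq heq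
    exact ((gAux_hasDeriv c hx).unique h0) ▸ rfl
  -- derive polynomial identity
  have key : ∀ x ∈ Set.Ioo (1:ℝ) 3,
      c 0 * x^6 + (-(c 3 + 2*(c 1 - c 2))) * x^4 + (2*c 3 - 6*c 4) * x^2 + 8*c 4 = 0 := by
    intro x hx
    have hx0 : (0:ℝ) < x := lt_trans one_pos hx.1
    have hxne : x ≠ 0 := ne_of_gt hx0
    have hu1 : (1:ℝ)/x < 1 := by rw [div_lt_one hx0]; exact hx.1
    have hw0 : (0:ℝ) < 1 - (1/x)^2 := by
      have hu0 : (0:ℝ) < 1/x := by positivity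
      nlinarith
    have h := hg x hx
    rw [gAux] at h
    have hD := hd x hx
    have hs0' : 0 < Real.sqrt (1 - (1/x)^2) := Real.sqrt_pos.2 hw0
    have hs2' : (Real.sqrt (1 - (1/x)^2))^2 * x^2 = x^2 - 1 := by
      rw [Real.sq_sqrt (le_of_lt hw0)]; field_simp
    obtain ⟨s, hsg⟩ : ∃ s, Real.sqrt (1 - (1/x)^2) = s := ⟨_, rfl⟩
    obtain ⟨θ, hθg⟩ : ∃ θ, Real.arcsin (1/x) = θ := ⟨_, rfl⟩
    rw [hsg] at h hD hs0' hs2'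
    rw [hθg] at h hD
    have hsne : s ≠ 0 := ne_of_gt hs0'
    have hs2 : s^2 * x^2 = x^2 - 1 := hs2'
    have e1 : s * (c 0*x^4 + c 3*x^2 + 2*c 4)
        + x^3*((c 1 + c 2)*Real.pi + (2*(c 1 - c 2))*θ) = 0 := by
      field_simp at h
      linear_combination h
    have e3' : (2*s*x^4) * ((c 0*x^4 + c 3*x^2 + 2*c 4)
        + s^2 * (3*c 0*x^6 + c 3*x^4 - 2*c 4*x^2)
        - (2*(c 1 - c 2))*x^4
        + 2*x^5*s*((c 1 + c 2)*Real.pi + (2*(c 1 - c 2))*θ)) = 0 := by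
      field_simp at hD
      linear_combination (2*s*x^4) * hD
    have hfne : 2*s*x^4 ≠ 0 := by positivity
    have e3 : (c 0*x^4 + c 3*x^2 + 2*c 4)
        + s^2 * (3*c 0*x^6 + c 3*x^4 - 2*c 4*x^2)
        - (2*(c 1 - c 2))*x^4
        + 2*x^5*s*((c 1 + c 2)*Real.pi + (2*(c 1 - c 2))*θ) = 0 :=
      (mul_eq_zero.1 e3').resolve_left hfne
    linear_combination e3 - 2*x^2*s*e1 - (c 0*x^4 - c 3*x^2 - 6*c 4)*hs2
  obtain ⟨hA, hB, hC, hD⟩ := poly_coeffs key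
  have hc4 : c 4 = 0 := by linarith
  have hc3 : c 3 = 0 := by linarith
  have hc0 : c 0 = 0 := hA
  have hc12 : c 1 = c 2 := by linarith
  -- use g at x = 2 to get c 1 + c 2 = 0
  have h2 := hg 2 (by norm_num)
  rw [gAux] at h2
  have hθ2 : (2:ℝ)*(c 1 - c 2) = 0 := by rw [hc12]; ring
  have hsum : c 1 + c 2 = 0 := by
    rw [hc0, hc3, hc4, hθ2] at h2
    simp at h2
    exact h2
  have hc1 : c 1 = 0 := by linarith
  have hc2 : c 2 = 0 := by linarith
  intro i
  fin_cases i <;> assumption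
end
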